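/- Strong consistency of the ratio estimator: under the strong-law assumption for each chain, $\hat I^{[f]}(h,d) = \frac{\sum_{l=1}^k\sum_{i=1}^{n_l} Y^{[f]}_{i,l}}{\sum_{l=1}^k\sum_{i=1}^{n_l} Y_{i,l}}$ converges almost surely to $I^{[f]}(h) = \int f\,d\nu_{h,y}$, where $Y^{[f]}_{i,l} = \frac{f(\theta^{(l)}_i)\nu_h(\theta^{(l)}_i)}{\sum_s a_s\nu_{h_s}(\theta^{(l)}_i)/d_s}$ and $Y_{i,l} = Y^{[1]}_{i,l}$, since the numerator converges a.s. to $I^{[f]}(h)B(h,h_1)$ and the denominator converges a.s. to $B(h,h_1) > 0$. -/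

import Mathlib

set_option maxHeartbeats 1000000

open MeasureTheory Filter
open scoped NNReal ENNReal

theorem stmt18 {Θ Ω : Type*} [MeasurableSpace Θ] [MeasurableSpace Ω]
    (P : Measure Ω) [IsProbabilityMeasure P]
    (μ : Measure Θ) [SigmaFinite μ]
    (k : ℕ) [NeZero k]
    (p νh f : Θ → ℝ) (νs : Fin k → Θ → ℝ)
    (hp : ∀ θ, 0 ≤ p θ) (hνh : ∀ θ, 0 ≤ νh θ) (hνs : ∀ s θ, 0 ≤ νs s θ)
    (hmp : Measurable p) (hmνh : Measurable νh) (hmνs : ∀ s, Measurable (νs s))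
    (hmf : Measurable f)
    (mh : ℝ) (ms : Fin k → ℝ)
    (hmh : mh = ∫ θ, p θ * νh θ ∂μ) (hms : ∀ s, ms s = ∫ θ, p θ * νs s θ ∂μ)
    (hmhpos : 0 < mh) (hmspos : ∀ s, 0 < ms s)
    (hinth : Integrable (fun θ => p θ * νh θ) μ)
    (hints : ∀ s, Integrable (fun θ => p θ * νs s θ) μ)
    (hintf : Integrable (fun θ => f θ * (p θ * νh θ / mh)) μ)
    (a : Fin k → ℝ) (ha : ∀ l, 0 < a l) (hasum : ∑ l, a l = 1)
    (hsupp : ∀ θ, (∀ s, νs s θ = 0) → νh θ = 0)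
    (nl : Fin k → ℕ → ℕ) (n : ℕ → ℕ)
    (hn : ∀ m, n m = ∑ l, nl l m)
    (hprop : ∀ l m, (nl l m : ℝ) = a l * (n m : ℝ))
    (hninf : Tendsto n atTop atTop)
    (θs : Fin k → ℕ → Ω → Θ)
    (hSLLN : ∀ l, ∀ φ : Θ → ℝ,
      Integrable φ (μ.withDensity fun θ => ENNReal.ofReal (p θ * νs l θ / ms l)) →
      ∀ᵐ ω ∂P, Tendsto
        (fun (M : ℕ) => (1 / (M : ℝ)) * ∑ i ∈ Finset.range M, φ (θs l i ω))
        atTop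
        (nhds (∫ x, φ x ∂(μ.withDensity fun θ => ENNReal.ofReal (p θ * νs l θ / ms l))))) :
    ∀ᵐ ω ∂P, Tendsto (fun m =>
        (∑ l, ∑ i ∈ Finset.range (nl l m),
            f (θs l i ω) * νh (θs l i ω) /
              (∑ s, a s * νs s (θs l i ω) / (ms s / ms 0))) /
        (∑ l, ∑ i ∈ Finset.range (nl l m),
            νh (θs l i ω) / (∑ s, a s * νs s (θs l i ω) / (ms s / ms 0))))
      atTop (nhds (∫ θ, f θ * (p θ * νh θ / mh) ∂μ)) := by
  classical
  have hms0 : (0:ℝ) < ms 0 := hmspos 0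
  -- abbreviations
  set D : Θ → ℝ := fun θ => ∑ s, a s * νs s θ / (ms s / ms 0) with hD
  set S : Θ → ℝ := fun θ => ∑ s, a s * (νs s θ / ms s) with hS
  have hSnn : ∀ θ, 0 ≤ S θ := fun θ => Finset.sum_nonneg fun s _ =>
    mul_nonneg (ha s).le (div_nonneg (hνs s θ) (hmspos s).le)
  have hDS : ∀ θ, D θ = ms 0 * S θ := by
    intro θ
    simp only [hD, hS, Finset.mul_sum]
    refine Finset.sum_congr rfl fun s _ => ?_
    rw [div_div_eq_mul_div]
    field_simp
  have hSzeroAll : ∀ θ, S θ = 0 → ∀ s, νs s θ = 0 := by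
    intro θ h0 s
    have hterm := (Finset.sum_eq_zero_iff_of_nonneg fun s _ =>
      mul_nonneg (ha s).le (div_nonneg (hνs s θ) (hmspos s).le)).mp h0 s (Finset.mem_univ s)
    rcases mul_eq_zero.mp hterm with h | h
    · exact absurd h (ha s).ne'
    · rcases div_eq_zero_iff.mp h with h | h
      · exact h
      · exact absurd h (hmspos s).ne'
  have hDmeas : Measurable D := by
    rw [hD]
    exact Finset.measurable_sum _ fun s _ => (measurable_const.mul (hmνs s)).div_const _
  -- key lemma for a generic numerator function g
  have key : ∀ g : Θ → ℝ, Measurable g →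
      Integrable (fun θ => g θ * (p θ * νh θ)) μ →
      (∀ l, Integrable (fun θ => g θ * νh θ / D θ)
          (μ.withDensity fun θ => ENNReal.ofReal (p θ * νs l θ / ms l))) ∧
      ∑ l, a l * ∫ θ, g θ * νh θ / D θ
          ∂(μ.withDensity fun θ => ENNReal.ofReal (p θ * νs l θ / ms l))
        = (∫ θ, g θ * (p θ * νh θ) ∂μ) / ms 0 := by
    intro g hmg hgint
    -- pointwise bound
    have hbound : ∀ l θ, |(g θ * νh θ / D θ) * (p θ * νs l θ / ms l)|
        ≤ |g θ * (p θ * νh θ)| / (ms 0 * a l) := by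
      intro l θ
      have hXnn : 0 ≤ p θ * νs l θ / ms l :=
        div_nonneg (mul_nonneg (hp θ) (hνs l θ)) (hmspos l).le
      have hDnn : 0 ≤ D θ := by rw [hDS]; exact mul_nonneg hms0.le (hSnn θ)
      have habs : |(g θ * νh θ / D θ) * (p θ * νs l θ / ms l)|
          = |g θ| * ((νh θ / D θ) * (p θ * νs l θ / ms l)) := by
        rw [abs_mul, abs_of_nonneg hXnn, abs_div, abs_mul,
          abs_of_nonneg (hνh θ), abs_of_nonneg hDnn, mul_div_assoc, mul_assoc]
      have hrhs : |g θ * (p θ * νh θ)| / (ms 0 * a l)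
          = |g θ| * ((p θ * νh θ) / (ms 0 * a l)) := by
        rw [abs_mul, abs_of_nonneg (mul_nonneg (hp θ) (hνh θ)), mul_div_assoc]
      rw [habs, hrhs]
      refine mul_le_mul_of_nonneg_left ?_ (abs_nonneg _)
      rcases (hSnn θ).eq_or_lt with h0 | hpos
      · have : νs l θ = 0 := hSzeroAll θ h0.symm l
        rw [this]
        simp only [mul_zero, zero_div, mul_zero]
        exact div_nonneg (mul_nonneg (hp θ) (hνh θ)) (mul_nonneg hms0.le (ha l).le)
      · have hSne : S θ ≠ 0 := hpos.ne'
        have hDθ : D θ = ms 0 * S θ := hDS θ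
        have hstep : νs l θ / ms l ≤ S θ / a l := by
          rw [le_div_iff₀ (ha l), mul_comm]
          exact Finset.single_le_sum (f := fun s => a s * (νs s θ / ms s))
            (fun s _ => mul_nonneg (ha s).le (div_nonneg (hνs s θ) (hmspos s).le))
            (Finset.mem_univ l)
        calc (νh θ / D θ) * (p θ * νs l θ / ms l)
            = (νh θ / D θ) * (p θ * (νs l θ / ms l)) := by rw [mul_div_assoc]
          _ ≤ (νh θ / D θ) * (p θ * (S θ / a l)) := by
              refine mul_le_mul_of_nonneg_left
                (mul_le_mul_of_nonneg_left hstep (hp θ)) (div_nonneg (hνh θ) hDnn)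
          _ = (p θ * νh θ) / (ms 0 * a l) := by
              rw [hDθ]
              field_simp
    -- integrability of the products w.r.t. μ
    have hintl : ∀ l, Integrable
        (fun θ => (g θ * νh θ / D θ) * (p θ * νs l θ / ms l)) μ := by
      intro l
      refine Integrable.mono' (hgint.abs.div_const (ms 0 * a l))
        (((hmg.mul hmνh).div hDmeas).mul
          ((hmp.mul (hmνs l)).div_const _)).aestronglyMeasurable
        (Eventually.of_forall fun θ => ?_)
      rw [Real.norm_eq_abs]
      exact hbound l θ
    constructor
    · intro l
      rw [integrable_withDensity_iff (show Measurable (fun θ => p θ * νs l θ / ms l) from (hmp.mul (hmνs l)).div_const _).ennreal_ofReal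
        (Eventually.of_forall fun θ => ENNReal.ofReal_lt_top)]
      refine (hintl l).congr (Eventually.of_forall fun θ => ?_)
      simp only [ENNReal.toReal_ofReal
        (div_nonneg (mul_nonneg (hp θ) (hνs l θ)) (hmspos l).le)]
    · -- integral computation
      have hIl : ∀ l, ∫ θ, g θ * νh θ / D θ
            ∂(μ.withDensity fun θ => ENNReal.ofReal (p θ * νs l θ / ms l))
          = ∫ θ, (g θ * νh θ / D θ) * (p θ * νs l θ / ms l) ∂μ := by
        intro l
        rw [show (fun θ => ENNReal.ofReal (p θ * νs l θ / ms l))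
            = (fun θ => (((p θ * νs l θ / ms l).toNNReal : ℝ≥0) : ℝ≥0∞)) from rfl,
          integral_withDensity_eq_integral_smul
            (show Measurable (fun θ => p θ * νs l θ / ms l) from (hmp.mul (hmνs l)).div_const _).real_toNNReal]
        refine integral_congr_ae (Eventually.of_forall fun θ => ?_)
        simp only [NNReal.smul_def, Real.coe_toNNReal _
          (div_nonneg (mul_nonneg (hp θ) (hνs l θ)) (hmspos l).le), smul_eq_mul]
        ring
      have hpt : ∀ θ, ∑ l, a l * ((g θ * νh θ / D θ) * (p θ * νs l θ / ms l))
          = g θ * (p θ * νh θ) / ms 0 := by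
        intro θ
        rcases (hSnn θ).eq_or_lt with h0 | hpos
        · have hall : ∀ s, νs s θ = 0 := hSzeroAll θ h0.symm
          have hν0 : νh θ = 0 := hsupp θ hall
          simp [hall, hν0]
        · have hSne : S θ ≠ 0 := hpos.ne'
          have hfac : ∑ l, a l * ((g θ * νh θ / D θ) * (p θ * νs l θ / ms l))
              = (g θ * νh θ / D θ) * (p θ * S θ) := by
            simp only [hS, Finset.mul_sum]
            refine Finset.sum_congr rfl fun l _ => ?_
            ring
          rw [hfac, hDS θ]
          field_simp
          try ring
      calc ∑ l, a l * ∫ θ, g θ * νh θ / D θ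
            ∂(μ.withDensity fun θ => ENNReal.ofReal (p θ * νs l θ / ms l))
          = ∑ l, ∫ θ, a l * ((g θ * νh θ / D θ) * (p θ * νs l θ / ms l)) ∂μ := by
            refine Finset.sum_congr rfl fun l _ => ?_
            rw [hIl l, ← integral_const_mul]
        _ = ∫ θ, ∑ l, a l * ((g θ * νh θ / D θ) * (p θ * νs l θ / ms l)) ∂μ :=
            (integral_finset_sum _ fun l _ => (hintl l).const_mul _).symm
        _ = ∫ θ, g θ * (p θ * νh θ) / ms 0 ∂μ :=
            integral_congr_ae (Eventually.of_forall hpt)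
        _ = (∫ θ, g θ * (p θ * νh θ) ∂μ) / ms 0 := integral_div _ _
  -- instantiations
  have hPNint : Integrable (fun θ => f θ * (p θ * νh θ)) μ := by
    refine (hintf.const_mul mh).congr (Eventually.of_forall fun θ => ?_)
    field_simp
    try ring
  have h1int : Integrable (fun θ => (1:ℝ) * (p θ * νh θ)) μ :=
    hinth.congr (Eventually.of_forall fun θ => (one_mul _).symm)
  obtain ⟨hintF, hvalF⟩ := key f hmf hPNint
  obtain ⟨hint1, hval1⟩ := key (fun _ => 1) measurable_const h1int
  -- values of the limits
  have hval1' : ∑ l, a l * ∫ θ, (1:ℝ) * νh θ / D θ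
      ∂(μ.withDensity fun θ => ENNReal.ofReal (p θ * νs l θ / ms l)) = mh / ms 0 := by
    rw [hval1]
    congr 1
    rw [hmh]
    exact integral_congr_ae (Eventually.of_forall fun θ => one_mul _)
  have hc1pos : (0:ℝ) < mh / ms 0 := div_pos hmhpos hms0
  -- almost sure convergence for each chain and both functions
  have hae : ∀ᵐ ω ∂P, ∀ l : Fin k,
      (Tendsto (fun M : ℕ => (1 / (M : ℝ)) * ∑ i ∈ Finset.range M,
          (fun θ => f θ * νh θ / D θ) (θs l i ω)) atTop
        (nhds (∫ x, (fun θ => f θ * νh θ / D θ) x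
          ∂(μ.withDensity fun θ => ENNReal.ofReal (p θ * νs l θ / ms l))))) ∧
      (Tendsto (fun M : ℕ => (1 / (M : ℝ)) * ∑ i ∈ Finset.range M,
          (fun θ => (1:ℝ) * νh θ / D θ) (θs l i ω)) atTop
        (nhds (∫ x, (fun θ => (1:ℝ) * νh θ / D θ) x
          ∂(μ.withDensity fun θ => ENNReal.ofReal (p θ * νs l θ / ms l))))) := by
    rw [ae_all_iff]
    intro l
    exact (hSLLN l _ (hintF l)).and (hSLLN l _ (hint1 l))
  -- tendsto of block lengths
  have hnl_atTop : ∀ l, Tendsto (nl l) atTop atTop := by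
    intro l
    rw [← tendsto_natCast_atTop_iff (R := ℝ)]
    have h2 : Tendsto (fun m => a l * (n m : ℝ)) atTop atTop :=
      (tendsto_natCast_atTop_atTop.comp hninf).const_mul_atTop (ha l)
    exact h2.congr fun m => (hprop l m).symm
  -- rescaling identity
  have hresc : ∀ (u : ℕ → ℝ) (l : Fin k) (m : ℕ),
      a l * ((1 / ((nl l m : ℕ) : ℝ)) * ∑ i ∈ Finset.range (nl l m), u i)
        = (1 / ((n m : ℕ) : ℝ)) * ∑ i ∈ Finset.range (nl l m), u i := by
    intro u l m
    rcases Nat.eq_zero_or_pos (n m) with h0 | hpos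
    · have : nl l m = 0 := by
        have := hprop l m
        rw [h0] at this
        exact_mod_cast by simpa using this
      simp [this, h0]
    · have hne : ((n m : ℕ) : ℝ) ≠ 0 := Nat.cast_ne_zero.mpr hpos.ne'
      rw [hprop l m]
      field_simp
      rw [mul_div_cancel_left₀ _ (ha l).ne']
  -- main argument
  filter_upwards [hae] with ω hω
  have hNum : Tendsto (fun m => ∑ l, a l * ((1 / ((nl l m : ℕ) : ℝ)) *
      ∑ i ∈ Finset.range (nl l m), f (θs l i ω) * νh (θs l i ω) / D (θs l i ω)))
      atTop (nhds (∑ l, a l * ∫ θ, f θ * νh θ / D θ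
        ∂(μ.withDensity fun θ => ENNReal.ofReal (p θ * νs l θ / ms l)))) := by
    refine tendsto_finset_sum _ fun l _ => ?_
    exact ((hω l).1.comp (hnl_atTop l)).const_mul (a l)
  have hDen : Tendsto (fun m => ∑ l, a l * ((1 / ((nl l m : ℕ) : ℝ)) *
      ∑ i ∈ Finset.range (nl l m), (1:ℝ) * νh (θs l i ω) / D (θs l i ω)))
      atTop (nhds (mh / ms 0)) := by
    rw [← hval1']
    refine tendsto_finset_sum _ fun l _ => ?_
    exact ((hω l).2.comp (hnl_atTop l)).const_mul (a l)
  have hratio := hNum.div hDen hc1pos.ne'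
  have hlimval : (∑ l, a l * ∫ θ, f θ * νh θ / D θ
        ∂(μ.withDensity fun θ => ENNReal.ofReal (p θ * νs l θ / ms l))) / (mh / ms 0)
      = ∫ θ, f θ * (p θ * νh θ / mh) ∂μ := by
    rw [hvalF]
    have hI : ∫ θ, f θ * (p θ * νh θ / mh) ∂μ
        = (∫ θ, f θ * (p θ * νh θ) ∂μ) / mh := by
      rw [← integral_div]
      exact integral_congr_ae (Eventually.of_forall fun θ => by ring)
    rw [hI]
    field_simp
  rw [hlimval] at hratio
  refine hratio.congr' ?_
  filter_upwards [hninf.eventually (eventually_ge_atTop 1)] with m hm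
  simp only [Pi.div_apply]
  have hne : ((n m : ℕ) : ℝ) ≠ 0 := Nat.cast_ne_zero.mpr (by omega)
  have hnum_eq : ∑ l, a l * ((1 / ((nl l m : ℕ) : ℝ)) *
      ∑ i ∈ Finset.range (nl l m), f (θs l i ω) * νh (θs l i ω) / D (θs l i ω))
      = (1 / ((n m : ℕ) : ℝ)) * ∑ l, ∑ i ∈ Finset.range (nl l m),
          f (θs l i ω) * νh (θs l i ω) / D (θs l i ω) := by
    rw [Finset.mul_sum]
    exact Finset.sum_congr rfl fun l _ => hresc _ l m
  have hden_eq : ∑ l, a l * ((1 / ((nl l m : ℕ) : ℝ)) *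
      ∑ i ∈ Finset.range (nl l m), (1:ℝ) * νh (θs l i ω) / D (θs l i ω))
      = (1 / ((n m : ℕ) : ℝ)) * ∑ l, ∑ i ∈ Finset.range (nl l m),
          (1:ℝ) * νh (θs l i ω) / D (θs l i ω) := by
    rw [Finset.mul_sum]
    exact Finset.sum_congr rfl fun l _ => hresc _ l m
  rw [hnum_eq, hden_eq, mul_div_mul_left _ _ (one_div_ne_zero hne)]
  simp only [hD, one_mul]
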